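/- For all n ≥ 0 and r ≥ 0: (r!/(1-λ)^r) S_λ(n,r) = ∑_{l=0}^{n} [ C(n,l) ∑_{m=0}^{min(2r,l)} C(2r,m)/(1-λ)^m · m! S(l,m) ] H_{n-l}^{(r)}(λ), where S_λ(n,r) = (1/r!) ∑_{j=0}^{r} C(r,j)(-λ)^{r-j} j^n and S(l,m) are the ordinary Stirling numbers of the second kind. -/

import Mathlib

open Finset PowerSeries

/-- `m! S(l,m) = ∑_{k₁+⋯+k_m = l, k_j ≥ 1} (l choose k₁,…,k_m)`, i.e. `m!` times the
Stirling number of the second kind. -/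
def mFactStirling (l m : ℕ) : ℕ :=
  ∑ k ∈ (Finset.Nat.antidiagonalTuple m l).filter (fun k => ∀ j, 1 ≤ k j),
    Nat.multinomial Finset.univ k

lemma coeff_exp_sub_one (j : ℕ) :
    coeff j (exp ℂ - 1) = if j = 0 then 0 else ((j.factorial : ℂ))⁻¹ := by
  rw [map_sub, coeff_exp, coeff_one]
  rcases eq_or_ne j 0 with rfl | h
  · simp
  · simp [h]

lemma mFactStirling_zero_of_lt {l m : ℕ} (h : l < m) : mFactStirling l m = 0 := by
  rw [mFactStirling, Finset.sum_eq_zero]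
  intro k hk
  simp only [mem_filter, Finset.Nat.mem_antidiagonalTuple] at hk
  obtain ⟨hsum, hpos⟩ := hk
  have : m ≤ l := by
    calc m = ∑ _j : Fin m, 1 := by simp
    _ ≤ ∑ j, k j := Finset.sum_le_sum fun j _ => hpos j
    _ = l := hsum
  omega

lemma coeff_exp_sub_one_pow (m l : ℕ) :
    coeff l ((exp ℂ - 1) ^ m) = ((l.factorial : ℂ))⁻¹ * mFactStirling l m := by
  rw [coeff_pow]
  have hc : ∀ f : ℕ →₀ ℕ, ∏ i ∈ range m, coeff (f i) (exp ℂ - 1) ≠ 0 →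
      ∀ i ∈ range m, f i ≠ 0 := by
    intro f hf i hi hfi
    exact hf (Finset.prod_eq_zero hi (by simp [coeff_exp_sub_one, hfi]))
  rw [← Finset.sum_filter_of_ne (p := fun f => ∀ i ∈ range m, f i ≠ 0) (fun f _ => hc f)]
  rw [mFactStirling, Nat.cast_sum, Finset.mul_sum]
  refine Finset.sum_nbij' (fun f => fun j : Fin m => f j)
    (fun k => Finsupp.onFinset (range m) (fun i => if h : i < m then k ⟨i, h⟩ else 0)
      (fun i hi => by by_contra hm; simp [Finset.mem_range] at hm; simp [hm] at hi))
    ?_ ?_ ?_ ?_ ?_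
  · intro f hf
    simp only [mem_filter, mem_finsuppAntidiag, Finset.mem_range] at hf ⊢
    obtain ⟨⟨hsum, hsupp⟩, hpos⟩ := hf
    constructor
    · rw [Finset.Nat.mem_antidiagonalTuple]
      rw [Fin.sum_univ_eq_sum_range (fun i => f i)]
      exact hsum
    · intro j
      exact Nat.one_le_iff_ne_zero.mpr (hpos j (by simp [j.isLt]))
  · intro k hk
    simp only [mem_filter, Finset.Nat.mem_antidiagonalTuple] at hk
    obtain ⟨hsum, hpos⟩ := hk
    simp only [mem_filter, mem_finsuppAntidiag]
    refine ⟨⟨?_, Finsupp.support_onFinset_subset⟩, ?_⟩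
    · trans (∑ i ∈ range m, if h : i < m then k ⟨i, h⟩ else 0)
      · exact Finset.sum_congr rfl (fun i _ => rfl)
      · rw [← Fin.sum_univ_eq_sum_range, ← hsum]
        exact Finset.sum_congr rfl (fun j _ => by simp [j.isLt])
    · intro i hi
      simp only [Finset.mem_range] at hi
      simp only [Finsupp.onFinset_apply, hi, dif_pos]
      exact Nat.one_le_iff_ne_zero.mp (hpos _)
  · intro f hf
    simp only [mem_filter, mem_finsuppAntidiag] at hf
    ext i
    simp only [Finsupp.onFinset_apply]
    split_ifs with h
    · rfl
    · by_contra hne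
      have := hf.1.2 (Finsupp.mem_support_iff.mpr (fun h0 => hne h0.symm))
      simp [Finset.mem_range] at this
      omega
  · intro k hk
    funext j
    simp [j.isLt]
  · intro f hf
    simp only [mem_filter, mem_finsuppAntidiag, Finset.mem_range] at hf
    obtain ⟨⟨hsum, hsupp⟩, hpos⟩ := hf
    have hprod : ∏ i ∈ range m, coeff (f i) (exp ℂ - 1)
        = (∏ i ∈ range m, ((f i).factorial : ℂ))⁻¹ := by
      rw [← Finset.prod_inv_distrib]
      exact Finset.prod_congr rfl (fun i hi => by
        rw [coeff_exp_sub_one, if_neg (hpos i (Finset.mem_range.mp hi))])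
    rw [hprod]
    have hms := Nat.multinomial_spec Finset.univ (fun j : Fin m => f j)
    have hsum' : ∑ j : Fin m, f j = l := by
      rw [Fin.sum_univ_eq_sum_range (fun i => f i)]; exact hsum
    rw [hsum'] at hms
    have hfact : (∏ i ∈ range m, ((f i).factorial : ℂ))
        = ∏ j : Fin m, ((f j).factorial : ℂ) :=
      (Fin.prod_univ_eq_prod_range (fun i => ((f i).factorial : ℂ)) m).symm
    have hprodne : (∏ j : Fin m, ((f j).factorial : ℂ)) ≠ 0 :=
      Finset.prod_ne_zero_iff.mpr (fun j _ => Nat.cast_ne_zero.mpr (Nat.factorial_ne_zero _))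
    rw [hfact]
    have hM : (Nat.multinomial Finset.univ fun j : Fin m => f j : ℂ)
        = (l.factorial : ℂ) * (∏ j : Fin m, ((f j).factorial : ℂ))⁻¹ := by
      rw [eq_mul_inv_iff_mul_eq₀ hprodne, mul_comm]
      exact_mod_cast congrArg (Nat.cast : ℕ → ℂ) hms
    rw [hM, ← mul_assoc, inv_mul_cancel₀ (Nat.cast_ne_zero.mpr l.factorial_ne_zero), one_mul]

lemma seriesA (lam : ℂ) (r : ℕ) :
    (PowerSeries.mk fun n => (∑ j ∈ range (r + 1),
        (r.choose j : ℂ) * (-lam) ^ (r - j) * (j : ℂ) ^ n) * ((n.factorial : ℂ))⁻¹)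
      = (exp ℂ - C (R := ℂ) lam) ^ r := by
  have h : exp ℂ - C (R := ℂ) lam = exp ℂ + C (R := ℂ) (-lam) := by rw [map_neg]; ring
  rw [h, add_pow]
  ext n
  rw [coeff_mk, map_sum, Finset.sum_mul]
  refine Finset.sum_congr rfl fun j hj => ?_
  rw [exp_pow_eq_rescale_exp, ← map_pow, ← map_natCast (C (R := ℂ)) (r.choose j),
    coeff_mul_C, coeff_mul_C, coeff_rescale, coeff_exp]
  have : (algebraMap ℚ ℂ) (1 / n.factorial) = ((n.factorial : ℂ))⁻¹ := by
    push_cast [one_div]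
    simp
  rw [this]
  ring

lemma seriesB (lam : ℂ) (hlam : lam ≠ 1) (r : ℕ) :
    (PowerSeries.mk fun l => (∑ m ∈ range (min (2 * r) l + 1),
        ((2 * r).choose m : ℂ) / (1 - lam) ^ m * (mFactStirling l m : ℂ)) * ((l.factorial : ℂ))⁻¹)
      = (C (R := ℂ) (1 - lam)⁻¹ * (exp ℂ - C (R := ℂ) lam)) ^ (2 * r) := by
  have hu : (1 : ℂ) - lam ≠ 0 := sub_ne_zero.mpr (Ne.symm hlam)
  have h1 : C (R := ℂ) (1 - lam)⁻¹ * (exp ℂ - C (R := ℂ) lam) = C (R := ℂ) (1 - lam)⁻¹ * (exp ℂ - 1) + 1 := by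
    rw [show exp ℂ - C (R := ℂ) lam = (exp ℂ - 1) + C (R := ℂ) (1 - lam) by rw [map_sub, map_one]; ring,
      mul_add, ← map_mul, inv_mul_cancel₀ hu, map_one]
  rw [h1, add_pow]
  ext l
  rw [coeff_mk, map_sum, Finset.sum_mul]
  have hterm : ∀ m, coeff l ((C (R := ℂ) (1 - lam)⁻¹ * (exp ℂ - 1)) ^ m * 1 ^ (2 * r - m) *
      ((2 * r).choose m : ℂ⟦X⟧))
      = ((2 * r).choose m : ℂ) / (1 - lam) ^ m * (mFactStirling l m : ℂ) * ((l.factorial : ℂ))⁻¹ := by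
    intro m
    rw [one_pow, mul_one, mul_pow, ← map_pow, ← map_natCast (C (R := ℂ)) ((2 * r).choose m),
      coeff_mul_C, coeff_C_mul, coeff_exp_sub_one_pow]
    rw [div_eq_mul_inv, ← inv_pow]
    ring
  rw [Finset.sum_congr rfl (fun m _ => hterm m)]
  apply Finset.sum_subset (Finset.range_subset_range.mpr (Nat.succ_le_succ (min_le_left _ _)))
  intro m hm hnm
  simp only [Finset.mem_range] at hm hnm
  have hml : l < m := by have := min_le_right (2 * r) l; omega
  rw [mFactStirling_zero_of_lt hml]
  simp


/-- `(r!/(1-λ)ʳ) S_λ(n,r) = ∑_{l=0}^{n} [C(n,l) ∑_{m=0}^{min(2r,l)} C(2r,m)/(1-λ)ᵐ · m!S(l,m)] H_{n-l}⁽ʳ⁾(λ)`,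
where `S_λ(n,r) = (1/r!) ∑_{j=0}^{r} C(r,j)(-λ)^{r-j} jⁿ` and `H k⁽ʳ⁾(λ)` are the
order-`r` Frobenius-Euler numbers. -/
theorem lambda_stirling_frobenius_euler (lam : ℂ) (hlam : lam ≠ 1)
    (H : ℕ → ℕ → ℂ)
    (hH : ∀ r : ℕ,
      (PowerSeries.mk fun n => H r n * ((n.factorial : ℂ))⁻¹) *
        (PowerSeries.exp ℂ - PowerSeries.C (R := ℂ) lam) ^ r =
      PowerSeries.C (R := ℂ) ((1 - lam) ^ r))
    (n r : ℕ) :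
    ((r.factorial : ℂ) / (1 - lam) ^ r) *
        (((r.factorial : ℂ))⁻¹ *
          ∑ j ∈ range (r + 1), (r.choose j : ℂ) * (-lam) ^ (r - j) * (j : ℂ) ^ n) =
      ∑ l ∈ range (n + 1),
        ((n.choose l : ℂ) * ∑ m ∈ range (min (2 * r) l + 1),
          ((2 * r).choose m : ℂ) / (1 - lam) ^ m * (mFactStirling l m : ℂ)) *
          H r (n - l) := by
  have hu : (1 : ℂ) - lam ≠ 0 := sub_ne_zero.mpr (Ne.symm hlam)
  have hPne : exp ℂ - C (R := ℂ) lam ≠ 0 := by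
    intro h
    have := congrArg ((constantCoeff (R := ℂ))) h
    simp only [map_sub, constantCoeff_exp, constantCoeff_C, map_zero] at this
    exact hu this
  have key :
      C (R := ℂ) (((1 - lam) ^ r)⁻¹) *
        (PowerSeries.mk fun n0 => (∑ j ∈ range (r + 1),
          (r.choose j : ℂ) * (-lam) ^ (r - j) * (j : ℂ) ^ n0) * ((n0.factorial : ℂ))⁻¹)
      = (PowerSeries.mk fun l => (∑ m ∈ range (min (2 * r) l + 1),
          ((2 * r).choose m : ℂ) / (1 - lam) ^ m * (mFactStirling l m : ℂ)) *
          ((l.factorial : ℂ))⁻¹) *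
        (PowerSeries.mk fun k => H r k * ((k.factorial : ℂ))⁻¹) := by
    apply mul_right_cancel₀ (pow_ne_zero r hPne)
    rw [seriesA, seriesB lam hlam r, mul_assoc
      ((C (R := ℂ) (1 - lam)⁻¹ * (exp ℂ - C (R := ℂ) lam)) ^ (2 * r)), hH r]
    rw [mul_pow, ← map_pow, mul_assoc, ← pow_add, ← two_mul]
    rw [mul_right_comm, ← map_mul]
    congr 2
    rw [inv_pow, two_mul, pow_add]
    field_simp
  have hkey := congrArg (coeff n) key
  rw [coeff_C_mul, coeff_mk, coeff_mul,
    Finset.Nat.sum_antidiagonal_eq_sum_range_succ_mk] at hkey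
  simp only [coeff_mk] at hkey
  have hgoal : ((r.factorial : ℂ) / (1 - lam) ^ r) *
      (((r.factorial : ℂ))⁻¹ *
        ∑ j ∈ range (r + 1), (r.choose j : ℂ) * (-lam) ^ (r - j) * (j : ℂ) ^ n)
      = (n.factorial : ℂ) * (((1 - lam) ^ r)⁻¹ *
        ((∑ j ∈ range (r + 1), (r.choose j : ℂ) * (-lam) ^ (r - j) * (j : ℂ) ^ n) *
          ((n.factorial : ℂ))⁻¹)) := by
    have hr : (r.factorial : ℂ) ≠ 0 := Nat.cast_ne_zero.mpr r.factorial_ne_zero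
    have hn : (n.factorial : ℂ) ≠ 0 := Nat.cast_ne_zero.mpr n.factorial_ne_zero
    field_simp
  rw [hgoal, hkey, Finset.mul_sum]
  refine Finset.sum_congr rfl fun l hl => ?_
  have hln : l ≤ n := by simp only [Finset.mem_range] at hl; omega
  rw [Nat.cast_choose ℂ hln]
  have hl' : ((l.factorial : ℂ)) ≠ 0 := Nat.cast_ne_zero.mpr l.factorial_ne_zero
  have hnl' : (((n - l).factorial : ℂ)) ≠ 0 := Nat.cast_ne_zero.mpr (n - l).factorial_ne_zero
  field_simp
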